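/- Let Ω ⊆ ℝ² be the rooms-and-halls domain. Then Ω is not an L^s-averaging domain for any 1 ≤ s < ∞. -/

import Mathlib

open MeasureTheory Metric Set
open scoped ENNReal

/-- The normalized `L^s`-mean oscillation integral `(1/|E|) ∫_E |u - u_E|^s dz`. -/
noncomputable def lsAvgE {n : ℕ} (s : ℝ) (u : EuclideanSpace ℝ (Fin n) → ℝ)
    (E : Set (EuclideanSpace ℝ (Fin n))) : ℝ≥0∞ :=
  (volume E)⁻¹ * ∫⁻ z in E, ENNReal.ofReal (|u z - (⨍ y in E, u y)| ^ s)

/-- `Ω` is an `L^s`-averaging domain: there is a finite constant `C` such that for every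
locally integrable `u`, `((1/|Ω|) ∫_Ω |u - u_Ω|^s)^{1/s} ≤ C · sup_B ((1/|B|) ∫_B |u - u_B|^s)^{1/s}`,
the supremum over all open balls `B ⊆ Ω`. -/
def IsLsAveragingDomain {n : ℕ} (s : ℝ) (Ω : Set (EuclideanSpace ℝ (Fin n))) : Prop :=
  ∃ C : ℝ≥0∞, C ≠ ⊤ ∧ ∀ u : EuclideanSpace ℝ (Fin n) → ℝ,
    MeasureTheory.LocallyIntegrableOn u Ω volume →
      (lsAvgE s u Ω) ^ (1/s) ≤
        C * ⨆ (x : EuclideanSpace ℝ (Fin n)) (ρ : ℝ) (_ : 0 < ρ ∧ ball x ρ ⊆ Ω),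
          (lsAvgE s u (ball x ρ)) ^ (1/s)

/-- `x_j = 1 − 1/2^j`. -/
noncomputable def rhx (j : ℕ) : ℝ := 1 - 1/2^j

/-- `x′_j = x_j + 1/2^{j+2}` for `j ≥ 1`, and `x′₀ = 0`. -/
noncomputable def rhx' (j : ℕ) : ℝ := if j = 0 then 0 else rhx j + 1/2^(j+2)

/-- The room `R_j = [x′_j, x_{j+1}] × [0, 1]`. -/
def rhRoom (j : ℕ) : Set (EuclideanSpace ℝ (Fin 2)) :=
  {z | z 0 ∈ Set.Icc (rhx' j) (rhx (j+1)) ∧ z 1 ∈ Set.Icc (0:ℝ) 1}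

/-- The hall `H_j = [x_j, x′_j] × [0, 1/(j+1)!]`. -/
def rhHall (j : ℕ) : Set (EuclideanSpace ℝ (Fin 2)) :=
  {z | z 0 ∈ Set.Icc (rhx j) (rhx' j) ∧ z 1 ∈ Set.Icc (0:ℝ) (1 / (Nat.factorial (j+1) : ℝ))}

/-- The half `A = R₀ ∪ ⋃_{j≥1} (R_j ∪ H_j)` of the rooms-and-halls domain. -/
def rhA : Set (EuclideanSpace ℝ (Fin 2)) :=
  rhRoom 0 ∪ ⋃ j ∈ Set.Ici 1, (rhRoom j ∪ rhHall j)

/-- The reflection `f(x, y) = (−x, y)`. -/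
def rhRefl (z : EuclideanSpace ℝ (Fin 2)) : EuclideanSpace ℝ (Fin 2) :=
  WithLp.toLp 2 (fun (i : Fin 2) => if i = 0 then -(z 0) else z 1)

/-- The rooms-and-halls domain `Ω = int(A ∪ f(A))`. -/
def roomsAndHalls : Set (EuclideanSpace ℝ (Fin 2)) := interior (rhA ∪ rhRefl '' rhA)

/-! ### auxiliary development -/

namespace RH

noncomputable def hh (j : ℕ) : ℝ := 1 / (Nat.factorial (j+1) : ℝ)

lemma hh_pos (j : ℕ) : 0 < hh j := by
  have := Nat.factorial_pos (j+1)
  unfold hh; positivity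

lemma hh_le_one (j : ℕ) : hh j ≤ 1 := by
  unfold hh
  rw [div_le_one (by exact_mod_cast Nat.factorial_pos (j+1))]
  exact_mod_cast Nat.one_le_iff_ne_zero.2 (Nat.factorial_pos (j+1)).ne'

lemma rhx_mono : Monotone rhx := by
  intro a b hab
  unfold rhx
  have : (1:ℝ)/2^b ≤ 1/2^a := by
    apply one_div_le_one_div_of_le (by positivity)
    exact pow_le_pow_right₀ (by norm_num) hab
  linarith

lemma rhx_lt_one (j : ℕ) : rhx j < 1 := by
  unfold rhx
  have : (0:ℝ) < 1/2^j := by positivity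
  linarith

lemma rhx_nonneg (j : ℕ) : 0 ≤ rhx j := by
  unfold rhx
  have : (1:ℝ)/2^j ≤ 1 := by
    rw [div_le_one (by positivity)]
    exact one_le_pow₀ (by norm_num)
  linarith

lemma rhx'_eq (j : ℕ) (hj : 1 ≤ j) : rhx' j = rhx j + 1/2^(j+2) := by
  unfold rhx'; rw [if_neg (by omega)]

lemma rhx_lt_rhx' (j : ℕ) (hj : 1 ≤ j) : rhx j < rhx' j := by
  rw [rhx'_eq j hj]
  have : (0:ℝ) < 1/2^(j+2) := by positivity
  linarith

lemma rhx'_le_rhx_succ (j : ℕ) : rhx' j ≤ rhx (j+1) := by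
  rcases Nat.eq_zero_or_pos j with h | h
  · subst h
    unfold rhx' rhx
    norm_num
  · rw [rhx'_eq j h]
    unfold rhx
    have h2 : (0:ℝ) < 2^j := by positivity
    have e1 : (2:ℝ)^(j+2) = 2^j * 4 := by rw [pow_add]; norm_num
    have e2 : (2:ℝ)^(j+1) = 2^j * 2 := by rw [pow_add]; norm_num
    rw [e1, e2]
    rw [div_mul_eq_div_div, div_mul_eq_div_div]
    set t := (1:ℝ)/2^j with ht
    have htpos : 0 < t := by positivity
    linarith

lemma rhx'_mono (j k : ℕ) (hj : 1 ≤ j) (hjk : j ≤ k) : rhx' j ≤ rhx' k := by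
  rcases eq_or_lt_of_le hjk with h | h
  · subst h; exact le_refl _
  · calc rhx' j ≤ rhx (j+1) := rhx'_le_rhx_succ j
      _ ≤ rhx k := rhx_mono h
      _ ≤ rhx' k := by
          rw [rhx'_eq k (by omega)]
          have : (0:ℝ) < 1/2^(k+2) := by positivity
          linarith

lemma rhx_le_rhx' (j : ℕ) : rhx j ≤ rhx' j := by
  rcases Nat.eq_zero_or_pos j with h | h
  · subst h; unfold rhx rhx'; norm_num
  · exact (rhx_lt_rhx' j h).le

lemma half_le_rhx (j : ℕ) (hj : 1 ≤ j) : 1/2 ≤ rhx j := by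
  have := rhx_mono hj
  unfold rhx at *
  norm_num at this ⊢
  linarith

lemma rhx'_nonneg (j : ℕ) : 0 ≤ rhx' j := by
  rcases Nat.eq_zero_or_pos j with h | h
  · subst h; unfold rhx'; norm_num
  · calc (0:ℝ) ≤ rhx j := rhx_nonneg j
      _ ≤ rhx' j := rhx_le_rhx' j

lemma rhx'_le_one (j : ℕ) : rhx' j ≤ 1 := by
  calc rhx' j ≤ rhx (j+1) := rhx'_le_rhx_succ j
    _ ≤ 1 := (rhx_lt_one _).le

/-- Membership in `A ∪ f(A)` with first coordinate strictly inside the hall strip `j`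
forces the point to lie in the hall. -/
lemma strip_confine {z : EuclideanSpace ℝ (Fin 2)} (hz : z ∈ rhA ∪ rhRefl '' rhA)
    {j : ℕ} (hj : 1 ≤ j) (h1 : rhx j < z 0) (h2 : z 0 < rhx' j) :
    0 ≤ z 1 ∧ z 1 ≤ hh j := by
  have hzpos : (0:ℝ) < z 0 := lt_of_lt_of_le (by linarith [half_le_rhx j hj]) h1.le
  rcases hz with hz | ⟨w, hw, hwz⟩
  · rcases hz with hz | hz
    · exfalso
      have : z 0 ≤ rhx 1 := by
        have := hz.1.2
        simpa using this
      have : rhx 1 ≤ rhx j := rhx_mono hj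
      have h12 : z 0 ≤ rhx j := by
        have := hz.1.2
        simp only [zero_add] at this
        linarith [rhx_mono hj]
      linarith
    · simp only [Set.mem_iUnion, Set.mem_Ici] at hz
      obtain ⟨k, hk, hzk⟩ := hz
      rcases hzk with hzk | hzk
      · -- room k, k ≥ 1
        exfalso
        obtain ⟨⟨hl, hr⟩, _⟩ := hzk
        rcases lt_or_ge k j with hkj | hkj
        · -- k + 1 ≤ j
          have : rhx (k+1) ≤ rhx j := rhx_mono hkj
          linarith
        · have : rhx' j ≤ rhx' k := rhx'_mono j k hj hkj
          linarith
      · -- hall k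
        obtain ⟨⟨hl, hr⟩, hy⟩ := hzk
        rcases lt_trichotomy k j with hkj | hkj | hkj
        · exfalso
          have h3 : rhx' k ≤ rhx (k+1) := rhx'_le_rhx_succ k
          have h4 : rhx (k+1) ≤ rhx j := rhx_mono hkj
          linarith
        · subst hkj
          exact ⟨hy.1, hy.2⟩
        · exfalso
          have h3 : rhx' j ≤ rhx (j+1) := rhx'_le_rhx_succ j
          have h4 : rhx (j+1) ≤ rhx k := rhx_mono hkj
          linarith
  · exfalso
    -- reflected points have nonpositive first coordinate
    have hw0 : 0 ≤ w 0 := by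
      rcases hw with hw | hw
      · have := hw.1.1
        have h0 : rhx' 0 = 0 := by unfold rhx'; norm_num
        linarith [this, h0]
      · simp only [Set.mem_iUnion, Set.mem_Ici] at hw
        obtain ⟨k, hk, hwk⟩ := hw
        rcases hwk with hwk | hwk
        · linarith [hwk.1.1, rhx'_nonneg k]
        · linarith [hwk.1.1, rhx_nonneg k]
    have : z 0 = -(w 0) := by rw [← hwz]; rfl
    linarith

end RH
-- appended to dev.lean inside namespace RH
namespace RH

/-- ramp over hall strip `j`, climbing linearly from 0 to 1. -/
noncomputable def ramp (j : ℕ) (t : ℝ) : ℝ := min 1 (max 0 ((t - rhx j) * 2^(j+2)))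

lemma ramp_nonneg (j : ℕ) (t : ℝ) : 0 ≤ ramp j t := le_min (by norm_num) (le_max_left _ _)

lemma ramp_le_one (j : ℕ) (t : ℝ) : ramp j t ≤ 1 := min_le_left _ _

lemma ramp_mono (j : ℕ) : Monotone (ramp j) := by
  intro a b hab
  unfold ramp
  have h2 : (0:ℝ) ≤ 2^(j+2) := by positivity
  exact min_le_min (le_refl 1) (max_le_max (le_refl 0) (by nlinarith))

lemma ramp_of_le (j : ℕ) {t : ℝ} (h : t ≤ rhx j) : ramp j t = 0 := by
  unfold ramp
  have h2 : (0:ℝ) < 2^(j+2) := by positivity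
  have : (t - rhx j) * 2^(j+2) ≤ 0 := mul_nonpos_of_nonpos_of_nonneg (by linarith) h2.le
  rw [max_eq_left this, min_eq_right (by norm_num)]

lemma ramp_of_ge (j : ℕ) (hj : 1 ≤ j) {t : ℝ} (h : rhx' j ≤ t) : ramp j t = 1 := by
  unfold ramp
  have h2 : (0:ℝ) < 2^(j+2) := by positivity
  have hx : rhx' j - rhx j = 1/2^(j+2) := by rw [rhx'_eq j hj]; ring
  have : (1:ℝ) ≤ (t - rhx j) * 2^(j+2) := by
    have : (1:ℝ)/2^(j+2) ≤ t - rhx j := by linarith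
    calc (1:ℝ) = (1/2^(j+2)) * 2^(j+2) := by field_simp
      _ ≤ (t - rhx j) * 2^(j+2) := by nlinarith
  rw [min_eq_left (le_max_of_le_right this)]

lemma ramp_lin (j : ℕ) (hj : 1 ≤ j) {t : ℝ} (h1 : rhx j ≤ t) (h2 : t ≤ rhx' j) :
    ramp j t = (t - rhx j) * 2^(j+2) := by
  unfold ramp
  have hp : (0:ℝ) < 2^(j+2) := by positivity
  have hx : rhx' j - rhx j = 1/2^(j+2) := by rw [rhx'_eq j hj]; ring
  have hub : (t - rhx j) * 2^(j+2) ≤ 1 := by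
    have : t - rhx j ≤ 1/2^(j+2) := by linarith
    calc (t - rhx j) * 2^(j+2) ≤ (1/2^(j+2)) * 2^(j+2) := by nlinarith
      _ = 1 := by field_simp
  rw [max_eq_right (by nlinarith), min_eq_right hub]

/-- key Lipschitz-type bound on ramp increments in terms of the overlap with the strip. -/
lemma ramp_sub_le (j : ℕ) (hj : 1 ≤ j) (a b : ℝ) :
    ramp j b - ramp j a ≤ 2^(j+2) * max 0 (min b (rhx' j) - max a (rhx j)) := by
  have hp : (0:ℝ) < 2^(j+2) := by positivity
  have hb : ramp j b = ramp j (min b (rhx' j)) := by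
    rcases le_total b (rhx' j) with h | h
    · rw [min_eq_left h]
    · rw [min_eq_right h, ramp_of_ge j hj h, ramp_of_ge j hj (le_refl _)]
  have ha : ramp j a = ramp j (max a (rhx j)) := by
    rcases le_total a (rhx j) with h | h
    · rw [max_eq_right h, ramp_of_le j (le_refl _), ramp_of_le j h]
    · rw [max_eq_left h]
  rw [hb, ha]
  set P := min b (rhx' j)
  set Q := max a (rhx j)
  rcases le_total P Q with h | h
  · have := ramp_mono j h
    have h0 : (0:ℝ) ≤ max 0 (P - Q) := le_max_left _ _
    nlinarith
  · have hQ1 : rhx j ≤ Q := le_max_right _ _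
    have hQ2 : Q ≤ rhx' j := le_trans h (min_le_right _ _)
    have hP1 : rhx j ≤ P := le_trans hQ1 h
    have hP2 : P ≤ rhx' j := min_le_right _ _
    rw [ramp_lin j hj hP1 hP2, ramp_lin j hj hQ1 hQ2]
    rw [max_eq_right (by linarith)]
    nlinarith

/-- jump sizes -/
noncomputable def aj (j : ℕ) : ℝ := (Nat.factorial (j+1) : ℝ) / 4^(j+1)

lemma aj_pos (j : ℕ) : 0 < aj j := by
  unfold aj
  have := Nat.factorial_pos (j+1)
  positivity

lemma aj_mul : ∀ j : ℕ, aj j * 2^(j+2) * hh j = (1/2)^j := by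
  intro j
  unfold aj hh
  have hf : (0:ℝ) < (Nat.factorial (j+1) : ℝ) := by exact_mod_cast Nat.factorial_pos (j+1)
  have h4 : (4:ℝ)^(j+1) = 2^(j+2) * 2^j := by
    rw [show (4:ℝ) = 2^2 by norm_num, ← pow_mul, ← pow_add]
    ring_nf
  field_simp [h4]
  have e1 : (1/2:ℝ)^j * 2^j = 1 := by rw [← mul_pow]; norm_num
  have e2 : (4:ℝ)^j = 2^j * 2^j := by rw [← mul_pow]; norm_num
  linear_combination (-(2^j*4:ℝ)) * e1 + (-(1/2:ℝ)^j*4) * e2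

/-- the staircase function -/
noncomputable def gg (N : ℕ) (t : ℝ) : ℝ := ∑ j ∈ Finset.Icc 1 N, aj j * ramp j t

lemma gg_mono (N : ℕ) : Monotone (gg N) := by
  intro a b hab
  unfold gg
  apply Finset.sum_le_sum
  intro j _
  exact mul_le_mul_of_nonneg_left (ramp_mono j hab) (aj_pos j).le

lemma gg_continuous (N : ℕ) : Continuous (gg N) := by
  unfold gg
  apply continuous_finset_sum
  intro j _
  unfold ramp
  exact continuous_const.mul (continuous_const.min
    (continuous_const.max ((continuous_id.sub continuous_const).mul continuous_const)))

lemma gg_of_le_half (N : ℕ) {t : ℝ} (h : t ≤ 1/2) : gg N t = 0 := by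
  unfold gg
  apply Finset.sum_eq_zero
  intro j hj
  simp only [Finset.mem_Icc] at hj
  rw [ramp_of_le j (le_trans h (half_le_rhx j hj.1)), mul_zero]

noncomputable def bb (N : ℕ) : ℝ := ∑ j ∈ Finset.Icc 1 N, aj j

lemma gg_of_ge (N : ℕ) {t : ℝ} (h : rhx' N ≤ t) : gg N t = bb N := by
  unfold gg bb
  apply Finset.sum_congr rfl
  intro j hj
  simp only [Finset.mem_Icc] at hj
  rw [ramp_of_ge j hj.1 (le_trans (rhx'_mono j N hj.1 hj.2) h), mul_one]

lemma aj_le_bb (N : ℕ) (hN : 1 ≤ N) : aj N ≤ bb N := by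
  unfold bb
  apply Finset.single_le_sum (f := fun j => aj j)
  · intro j _; exact (aj_pos j).le
  · simp [Finset.mem_Icc, hN]

lemma bb_pos (N : ℕ) (hN : 1 ≤ N) : 0 < bb N := lt_of_lt_of_le (aj_pos N) (aj_le_bb N hN)

lemma sum_half_pow_eq (N : ℕ) : ∑ j ∈ Finset.Icc 1 N, ((1:ℝ)/2)^j = 1 - (1/2)^N := by
  induction N with
  | zero => simp
  | succ n ih =>
    rw [Finset.sum_Icc_succ_top (by omega), ih, pow_succ]
    ring

lemma sum_half_pow_le (N : ℕ) : ∑ j ∈ Finset.Icc 1 N, ((1:ℝ)/2)^j ≤ 1 := by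
  rw [sum_half_pow_eq]
  have : (0:ℝ) ≤ (1/2)^N := by positivity
  linarith

end RH
namespace RH

noncomputable def mk2 (x y : ℝ) : EuclideanSpace ℝ (Fin 2) :=
  (EuclideanSpace.equiv (Fin 2) ℝ).symm ![x, y]

lemma mk2_apply0 (x y : ℝ) : mk2 x y 0 = x := rfl
lemma mk2_apply1 (x y : ℝ) : mk2 x y 1 = y := rfl

lemma dist_eq2 (z c : EuclideanSpace ℝ (Fin 2)) :
    dist z c = Real.sqrt ((z 0 - c 0)^2 + (z 1 - c 1)^2) := by
  rw [EuclideanSpace.dist_eq, Fin.sum_univ_two, Real.dist_eq, Real.dist_eq]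
  simp [sq_abs]

lemma mem_ball_of_sq {x y ρ : ℝ} {c : EuclideanSpace ℝ (Fin 2)}
    (hρ : 0 < ρ) (h : (x - c 0)^2 + (y - c 1)^2 < ρ^2) : mk2 x y ∈ ball c ρ := by
  rw [mem_ball, dist_eq2, mk2_apply0, mk2_apply1]
  rw [show ρ = Real.sqrt (ρ^2) by rw [Real.sqrt_sq hρ.le]]
  exact Real.sqrt_lt_sqrt (by positivity) h

lemma abs_coord_le_dist (z c : EuclideanSpace ℝ (Fin 2)) : |z 0 - c 0| ≤ dist z c := by
  rw [dist_eq2, ← Real.sqrt_sq_eq_abs]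
  apply Real.sqrt_le_sqrt
  nlinarith [sq_nonneg (z 1 - c 1)]

/-- **Key geometric estimate**: a ball contained in `Ω` overlaps the hall strip `j`
by at most the hall height `hh j` in the horizontal direction. -/
lemma overlap_le {c : EuclideanSpace ℝ (Fin 2)} {ρ : ℝ} (hρ : 0 < ρ)
    (hsub : ball c ρ ⊆ roomsAndHalls) (j : ℕ) (hj : 1 ≤ j) :
    min (c 0 + ρ) (rhx' j) - max (c 0 - ρ) (rhx j) ≤ hh j := by
  set x0 := c 0
  set y0 := c 1
  set m := max (x0 - ρ) (rhx j) with hm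
  set M := min (x0 + ρ) (rhx' j) with hM
  by_contra hcon
  push_neg at hcon
  have hhp := hh_pos j
  have hD : 0 < M - m := lt_trans hhp hcon
  set D := M - m with hDdef
  -- midpoint
  set x := (m + M)/2 with hx
  have hxm : m < x := by simp only [hx]; linarith
  have hxM : x < M := by simp only [hx]; linarith
  have hx1 : rhx j < x := lt_of_le_of_lt (le_max_right _ _) hxm
  have hx2 : x < rhx' j := lt_of_lt_of_le hxM (min_le_right _ _)
  have hDle : D ≤ 2*ρ := by
    have h1 : x0 - ρ ≤ m := le_max_left _ _
    have h2 : M ≤ x0 + ρ := min_le_left _ _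
    simp only [hDdef]; linarith
  have habs : |x - x0| ≤ ρ - D/2 := by
    have h1 : x0 - ρ ≤ m := le_max_left _ _
    have h2 : M ≤ x0 + ρ := min_le_left _ _
    rw [abs_le]
    constructor
    · simp only [hx]; simp only [hDdef] at *; linarith
    · simp only [hx]; simp only [hDdef] at *; linarith
  -- every y with |y - y0| < D/2 gives a point of the ball in the strip
  have key : ∀ y : ℝ, |y - y0| < D/2 → 0 ≤ y ∧ y ≤ hh j := by
    intro y hy
    have hmem : mk2 x y ∈ ball c ρ := by
      apply mem_ball_of_sq hρ
      have h1 : (x - x0)^2 ≤ (ρ - D/2)^2 := by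
        have := abs_nonneg (x - x0)
        nlinarith [sq_abs (x - x0)]
      have h2 : (y - y0)^2 < (D/2)^2 := by
        nlinarith [sq_abs (y - y0), abs_nonneg (y - y0)]
      nlinarith
    have hmem2 : mk2 x y ∈ rhA ∪ rhRefl '' rhA := interior_subset (hsub hmem)
    have := strip_confine hmem2 hj (by rwa [mk2_apply0]) (by rwa [mk2_apply0])
    rwa [mk2_apply1] at this
  -- take y near the two ends of the slice
  set t := (D - hh j)/4 with ht
  have htpos : 0 < t := by simp only [ht]; linarith
  have htD : t < D/2 := by simp only [ht]; linarith
  have h1 := key (y0 + (D/2 - t)) (by rw [add_sub_cancel_left, abs_of_nonneg (by linarith)]; linarith)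
  have h2 := key (y0 - (D/2 - t)) (by rw [sub_sub_cancel_left, abs_neg, abs_of_nonneg (by linarith)]; linarith)
  have := h1.2
  have := h2.1
  simp only [ht] at *
  linarith

/-- oscillation of the staircase over any admissible ball is at most 1 -/
lemma osc_le {c : EuclideanSpace ℝ (Fin 2)} {ρ : ℝ} (hρ : 0 < ρ)
    (hsub : ball c ρ ⊆ roomsAndHalls) (N : ℕ) :
    gg N (c 0 + ρ) - gg N (c 0 - ρ) ≤ 1 := by
  unfold gg
  rw [← Finset.sum_sub_distrib]
  calc ∑ j ∈ Finset.Icc 1 N, (aj j * ramp j (c 0 + ρ) - aj j * ramp j (c 0 - ρ))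
      ≤ ∑ j ∈ Finset.Icc 1 N, ((1:ℝ)/2)^j := by
        apply Finset.sum_le_sum
        intro j hj
        simp only [Finset.mem_Icc] at hj
        rw [← mul_sub]
        have h1 : ramp j (c 0 + ρ) - ramp j (c 0 - ρ) ≤
            2^(j+2) * max 0 (min (c 0 + ρ) (rhx' j) - max (c 0 - ρ) (rhx j)) :=
          ramp_sub_le j hj.1 _ _
        have h2 : max 0 (min (c 0 + ρ) (rhx' j) - max (c 0 - ρ) (rhx j)) ≤ hh j :=
          max_le (hh_pos j).le (overlap_le hρ hsub j hj.1)
        have hp : (0:ℝ) < 2^(j+2) := by positivity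
        calc aj j * (ramp j (c 0 + ρ) - ramp j (c 0 - ρ))
            ≤ aj j * (2^(j+2) * hh j) := by
              apply mul_le_mul_of_nonneg_left _ (aj_pos j).le
              calc ramp j (c 0 + ρ) - ramp j (c 0 - ρ)
                  ≤ 2^(j+2) * max 0 (min (c 0 + ρ) (rhx' j) - max (c 0 - ρ) (rhx j)) := h1
                _ ≤ 2^(j+2) * hh j := by nlinarith
          _ = (1/2)^j := by rw [← mul_assoc]; exact aj_mul j
    _ ≤ 1 := sum_half_pow_le N

end RH
namespace RH

noncomputable def uu (N : ℕ) (z : EuclideanSpace ℝ (Fin 2)) : ℝ := gg N (z 0)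

lemma coord0_continuous : Continuous fun z : EuclideanSpace ℝ (Fin 2) => z 0 :=
  (EuclideanSpace.proj (0:Fin 2) (𝕜 := ℝ)).continuous

lemma coord1_continuous : Continuous fun z : EuclideanSpace ℝ (Fin 2) => z 1 :=
  (EuclideanSpace.proj (1:Fin 2) (𝕜 := ℝ)).continuous

lemma uu_continuous (N : ℕ) : Continuous (uu N) :=
  (gg_continuous N).comp coord0_continuous

/-- the average of `uu N` over a ball lies between the endpoint values -/
lemma ball_term_le (s : ℝ) (hs : 1 ≤ s) (N : ℕ) {c : EuclideanSpace ℝ (Fin 2)} {ρ : ℝ}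
    (hρ : 0 < ρ) (hsub : ball c ρ ⊆ roomsAndHalls) :
    lsAvgE s (uu N) (ball c ρ) ^ (1/s) ≤ 1 := by
  set B := ball c ρ with hB
  have hvol0 : volume B ≠ 0 := (measure_ball_pos volume c hρ).ne'
  have hvolt : volume B ≠ ⊤ := measure_ball_lt_top.ne
  have htR : 0 < (volume B).toReal := ENNReal.toReal_pos hvol0 hvolt
  set lo := gg N (c 0 - ρ) with hlo
  set hi := gg N (c 0 + ρ) with hhi
  have hosc : hi - lo ≤ 1 := osc_le hρ hsub N
  have hbound : ∀ z ∈ B, lo ≤ uu N z ∧ uu N z ≤ hi := by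
    intro z hz
    have hd : |z 0 - c 0| ≤ ρ := (abs_coord_le_dist z c).trans (le_of_lt hz)
    rw [abs_le] at hd
    exact ⟨gg_mono N (by linarith [hd.1]), gg_mono N (by linarith [hd.2])⟩
  have hInt : IntegrableOn (uu N) B volume :=
    (((uu_continuous N).continuousOn).integrableOn_compact (isCompact_closedBall c ρ)).mono_set
      ball_subset_closedBall
  have hIntc : ∀ r : ℝ, IntegrableOn (fun _ => r) B volume := fun r =>
    integrableOn_const hvolt enorm_ne_top
  set av := ⨍ y in B, uu N y with hav
  have havle : av ≤ hi := by
    rw [hav, setAverage_eq]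
    have h1 : ∫ y in B, uu N y ≤ ∫ _ in B, hi :=
      setIntegral_mono_on hInt (hIntc hi) measurableSet_ball (fun z hz => (hbound z hz).2)
    rw [setIntegral_const] at h1
    rw [smul_eq_mul]
    calc (volume B).toReal⁻¹ * ∫ y in B, uu N y ≤ (volume B).toReal⁻¹ * ((volume B).toReal * hi) := by
          apply mul_le_mul_of_nonneg_left _ (by positivity)
          simpa [Measure.real] using h1
      _ = hi := by field_simp
  have havge : lo ≤ av := by
    rw [hav, setAverage_eq]
    have h1 : ∫ _ in B, lo ≤ ∫ y in B, uu N y :=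
      setIntegral_mono_on (hIntc lo) hInt measurableSet_ball (fun z hz => (hbound z hz).1)
    rw [setIntegral_const] at h1
    rw [smul_eq_mul]
    calc lo = (volume B).toReal⁻¹ * ((volume B).toReal * lo) := by field_simp
      _ ≤ (volume B).toReal⁻¹ * ∫ y in B, uu N y := by
          apply mul_le_mul_of_nonneg_left _ (by positivity)
          simpa [Measure.real] using h1
  have hpt : ∀ z ∈ B, ENNReal.ofReal (|uu N z - av| ^ s) ≤ 1 := by
    intro z hz
    rw [ENNReal.ofReal_le_one]
    apply Real.rpow_le_one (abs_nonneg _) _ (by linarith)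
    rw [abs_le]
    have := (hbound z hz).1
    have := (hbound z hz).2
    constructor <;> linarith
  have hlint : ∫⁻ z in B, ENNReal.ofReal (|uu N z - av| ^ s) ≤ volume B := by
    calc ∫⁻ z in B, ENNReal.ofReal (|uu N z - av| ^ s) ≤ ∫⁻ _ in B, 1 :=
          setLIntegral_mono measurable_const hpt
      _ = volume B := by rw [setLIntegral_const, one_mul]
  have : lsAvgE s (uu N) B ≤ 1 := by
    unfold lsAvgE
    calc (volume B)⁻¹ * ∫⁻ z in B, ENNReal.ofReal (|uu N z - (⨍ y in B, uu N y)| ^ s)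
        ≤ (volume B)⁻¹ * volume B := by
          apply mul_le_mul_right _ _
          rw [← hav]
          exact hlint
      _ = 1 := ENNReal.inv_mul_cancel hvol0 hvolt
  exact ENNReal.rpow_le_one this (by positivity)

/-! ### volume computations -/

lemma volume_prod_set (S T : Set ℝ) (hS : MeasurableSet S) (hT : MeasurableSet T) :
    volume {z : EuclideanSpace ℝ (Fin 2) | z 0 ∈ S ∧ z 1 ∈ T} = volume S * volume T := by
  have hmp := EuclideanSpace.volume_preserving_symm_measurableEquiv_toLp (Fin 2)
  have hset : {f : Fin 2 → ℝ | f 0 ∈ S ∧ f 1 ∈ T} = Set.univ.pi ![S, T] := by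
    ext f
    simp [Set.mem_pi, Fin.forall_fin_two]
  have hmeas : MeasurableSet {f : Fin 2 → ℝ | f 0 ∈ S ∧ f 1 ∈ T} := by
    exact ((measurable_pi_apply 0) hS).inter ((measurable_pi_apply 1) hT)
  have key : volume ((MeasurableEquiv.toLp 2 (Fin 2 → ℝ)).symm ⁻¹' {f : Fin 2 → ℝ | f 0 ∈ S ∧ f 1 ∈ T})
      = volume {f : Fin 2 → ℝ | f 0 ∈ S ∧ f 1 ∈ T} :=
    hmp.measure_preimage hmeas.nullMeasurableSet
  have hpre : (MeasurableEquiv.toLp 2 (Fin 2 → ℝ)).symm ⁻¹' {f : Fin 2 → ℝ | f 0 ∈ S ∧ f 1 ∈ T}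
      = {z : EuclideanSpace ℝ (Fin 2) | z 0 ∈ S ∧ z 1 ∈ T} := rfl
  rw [hpre] at key
  rw [key, hset, volume_pi_pi]
  rw [Fin.prod_univ_two]
  simp

end RH
namespace RH

def boxP : Set (EuclideanSpace ℝ (Fin 2)) := {z | z 0 ∈ Ioo (0:ℝ) (1/2) ∧ z 1 ∈ Ioo (0:ℝ) 1}

def boxQ (N : ℕ) : Set (EuclideanSpace ℝ (Fin 2)) :=
  {z | z 0 ∈ Ioo (rhx' N) (rhx (N+1)) ∧ z 1 ∈ Ioo (0:ℝ) 1}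

lemma boxP_open : IsOpen boxP :=
  ((isOpen_Ioo.preimage coord0_continuous).inter (isOpen_Ioo.preimage coord1_continuous))

lemma boxQ_open (N : ℕ) : IsOpen (boxQ N) :=
  ((isOpen_Ioo.preimage coord0_continuous).inter (isOpen_Ioo.preimage coord1_continuous))

lemma boxP_subset : boxP ⊆ roomsAndHalls := by
  apply interior_maximal _ boxP_open
  intro z hz
  left; left
  have h0 : rhx' 0 = 0 := by unfold rhx'; norm_num
  have h1 : rhx 1 = 1/2 := by unfold rhx; norm_num
  exact ⟨⟨by rw [h0]; exact hz.1.1.le, by rw [h1]; exact hz.1.2.le⟩,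
    ⟨hz.2.1.le, hz.2.2.le⟩⟩

lemma boxQ_subset (N : ℕ) (hN : 1 ≤ N) : boxQ N ⊆ roomsAndHalls := by
  apply interior_maximal _ (boxQ_open N)
  intro z hz
  left; right
  simp only [Set.mem_iUnion, Set.mem_Ici]
  exact ⟨N, hN, Or.inl ⟨⟨hz.1.1.le, hz.1.2.le⟩, ⟨hz.2.1.le, hz.2.2.le⟩⟩⟩

lemma volume_boxP : volume boxP = ENNReal.ofReal (1/2) := by
  unfold boxP
  rw [volume_prod_set _ _ measurableSet_Ioo measurableSet_Ioo, Real.volume_Ioo, Real.volume_Ioo]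
  rw [← ENNReal.ofReal_mul (by norm_num)]
  norm_num

lemma boxQ_width (N : ℕ) (hN : 1 ≤ N) : rhx (N+1) - rhx' N = 1/2^(N+2) := by
  rw [rhx'_eq N hN]
  unfold rhx
  have e1 : (2:ℝ)^(N+1) = 2^N * 2 := by rw [pow_add]; norm_num
  have e2 : (2:ℝ)^(N+2) = 2^N * 4 := by rw [pow_add]; norm_num
  have h2 : (0:ℝ) < 2^N := by positivity
  rw [e1, e2]
  field_simp
  ring

lemma volume_boxQ (N : ℕ) (hN : 1 ≤ N) : volume (boxQ N) = ENNReal.ofReal (1/2^(N+2)) := by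
  unfold boxQ
  rw [volume_prod_set _ _ measurableSet_Ioo measurableSet_Ioo, Real.volume_Ioo, Real.volume_Ioo,
    boxQ_width N hN]
  rw [← ENNReal.ofReal_mul (by positivity)]
  norm_num

lemma volume_Omega_le : volume roomsAndHalls ≤ 2 := by
  have hsub : roomsAndHalls ⊆ {z : EuclideanSpace ℝ (Fin 2) | z 0 ∈ Icc (-1:ℝ) 1 ∧ z 1 ∈ Icc (0:ℝ) 1} := by
    intro z hz
    have hz' : z ∈ rhA ∪ rhRefl '' rhA := interior_subset hz
    have main : ∀ w : EuclideanSpace ℝ (Fin 2), w ∈ rhA →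
        (0 ≤ w 0 ∧ w 0 ≤ 1) ∧ (0 ≤ w 1 ∧ w 1 ≤ 1) := by
      intro w hw
      rcases hw with hw | hw
      · obtain ⟨⟨h1, h2⟩, h3, h4⟩ := hw
        have h0 : rhx' 0 = 0 := by unfold rhx'; norm_num
        exact ⟨⟨by linarith [h0 ▸ h1], by linarith [rhx_lt_one 1]⟩, h3, h4⟩
      · simp only [Set.mem_iUnion, Set.mem_Ici] at hw
        obtain ⟨k, hk, hw⟩ := hw
        rcases hw with hw | hw
        · obtain ⟨⟨h1, h2⟩, h3, h4⟩ := hw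
          exact ⟨⟨le_trans (rhx'_nonneg k) h1, by linarith [rhx_lt_one (k+1)]⟩, h3, h4⟩
        · obtain ⟨⟨h1, h2⟩, h3, h4⟩ := hw
          exact ⟨⟨le_trans (rhx_nonneg k) h1, by linarith [rhx'_le_one k]⟩, h3,
            le_trans h4 (hh_le_one k)⟩
    rcases hz' with hz' | ⟨w, hw, hwz⟩
    · have := main z hz'
      exact ⟨⟨by linarith [this.1.1], this.1.2⟩, this.2⟩
    · have hmw := main w hw
      have h0 : z 0 = -(w 0) := by rw [← hwz]; rfl
      have h1 : z 1 = w 1 := by rw [← hwz]; rfl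
      have hz0 : z 0 ∈ Icc (-1:ℝ) 1 := by
        rw [Set.mem_Icc, h0]
        exact ⟨by linarith [hmw.1.2], by linarith [hmw.1.1]⟩
      have hz1 : z 1 ∈ Icc (0:ℝ) 1 := by rw [Set.mem_Icc, h1]; exact hmw.2
      exact ⟨hz0, hz1⟩
  calc volume roomsAndHalls ≤ volume {z : EuclideanSpace ℝ (Fin 2) | z 0 ∈ Icc (-1:ℝ) 1 ∧ z 1 ∈ Icc (0:ℝ) 1} :=
        measure_mono hsub
    _ = 2 := by
        rw [volume_prod_set _ _ measurableSet_Icc measurableSet_Icc, Real.volume_Icc, Real.volume_Icc]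
        rw [← ENNReal.ofReal_mul (by norm_num)]
        norm_num

lemma uu_on_boxP (N : ℕ) {z : EuclideanSpace ℝ (Fin 2)} (hz : z ∈ boxP) : uu N z = 0 :=
  gg_of_le_half N hz.1.2.le

lemma uu_on_boxQ (N : ℕ) {z : EuclideanSpace ℝ (Fin 2)} (hz : z ∈ boxQ N) : uu N z = bb N :=
  gg_of_ge N hz.1.1.le

/-- lower bound for the oscillation integral over `Ω`, for an arbitrary centering constant -/
lemma lintegral_lower (s : ℝ) (hs : 1 ≤ s) (N : ℕ) (hN : 1 ≤ N) (cst : ℝ) :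
    ENNReal.ofReal ((bb N / 2)^s) * ENNReal.ofReal (1/2^(N+2)) ≤
      ∫⁻ z in roomsAndHalls, ENNReal.ofReal (|uu N z - cst| ^ s) := by
  have hbbpos := bb_pos N hN
  have hle : ENNReal.ofReal (1/2^(N+2)) ≤ ENNReal.ofReal (1/2:ℝ) := by
    apply ENNReal.ofReal_le_ofReal
    rw [div_le_div_iff₀ (by positivity) (by norm_num)]
    have : (2:ℝ) ≤ 2^(N+2) := by
      calc (2:ℝ) = 2^1 := by norm_num
      _ ≤ 2^(N+2) := pow_le_pow_right₀ (by norm_num) (by omega)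
    linarith
  rcases le_or_gt cst (bb N / 2) with hc | hc
  · -- use boxQ
    calc ENNReal.ofReal ((bb N / 2)^s) * ENNReal.ofReal (1/2^(N+2))
        ≤ ENNReal.ofReal (|bb N - cst|^s) * volume (boxQ N) := by
          rw [volume_boxQ N hN]
          apply mul_le_mul_left
          apply ENNReal.ofReal_le_ofReal
          apply Real.rpow_le_rpow (by positivity) _ (by linarith)
          rw [abs_of_nonneg (by linarith)]
          linarith
      _ = ∫⁻ z in boxQ N, ENNReal.ofReal (|uu N z - cst| ^ s) := by
          rw [setLIntegral_congr_fun (boxQ_open N).measurableSet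
            (fun z hz => by rw [uu_on_boxQ N hz])]
          rw [setLIntegral_const, mul_comm]
      _ ≤ ∫⁻ z in roomsAndHalls, ENNReal.ofReal (|uu N z - cst| ^ s) :=
          lintegral_mono_set (boxQ_subset N hN)
  · -- use boxP
    calc ENNReal.ofReal ((bb N / 2)^s) * ENNReal.ofReal (1/2^(N+2))
        ≤ ENNReal.ofReal (|0 - cst|^s) * volume boxP := by
          rw [volume_boxP]
          apply mul_le_mul' _ hle
          apply ENNReal.ofReal_le_ofReal
          apply Real.rpow_le_rpow (by positivity) _ (by linarith)
          rw [zero_sub, abs_neg, abs_of_pos (by linarith)]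
          linarith
      _ = ∫⁻ z in boxP, ENNReal.ofReal (|uu N z - cst| ^ s) := by
          rw [setLIntegral_congr_fun boxP_open.measurableSet
            (fun z hz => by rw [uu_on_boxP N hz])]
          rw [setLIntegral_const, mul_comm]
      _ ≤ ∫⁻ z in roomsAndHalls, ENNReal.ofReal (|uu N z - cst| ^ s) :=
          lintegral_mono_set boxP_subset

/-- lower bound for `lsAvgE` over `Ω`. -/
lemma lsAvg_lower (s : ℝ) (hs : 1 ≤ s) (N : ℕ) (hN : 1 ≤ N) :
    ENNReal.ofReal ((bb N / 2)^s * (1/2^(N+2)) * (1/2)) ≤ lsAvgE s (uu N) roomsAndHalls := by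
  unfold lsAvgE
  have hbb : (0:ℝ) ≤ bb N / 2 := by linarith [bb_pos N hN]
  have hrp : (0:ℝ) ≤ (bb N / 2)^s := Real.rpow_nonneg hbb s
  have h1 : (2:ℝ≥0∞)⁻¹ ≤ (volume roomsAndHalls)⁻¹ := ENNReal.inv_le_inv' volume_Omega_le
  have h2 := lintegral_lower s hs N hN (⨍ y in roomsAndHalls, uu N y)
  calc ENNReal.ofReal ((bb N / 2)^s * (1/2^(N+2)) * (1/2))
      = (2:ℝ≥0∞)⁻¹ * (ENNReal.ofReal ((bb N / 2)^s) * ENNReal.ofReal (1/2^(N+2))) := by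
        rw [← ENNReal.ofReal_mul hrp]
        rw [show ((2:ℝ≥0∞))⁻¹ = ENNReal.ofReal (1/2) by
          rw [ENNReal.ofReal_div_of_pos (by norm_num), ENNReal.ofReal_one, ENNReal.ofReal_ofNat]
          simp [one_div]]
        rw [← ENNReal.ofReal_mul (by positivity : (0:ℝ) ≤ 1/2)]
        ring_nf
    _ ≤ (volume roomsAndHalls)⁻¹ * ∫⁻ z in roomsAndHalls,
          ENNReal.ofReal (|uu N z - (⨍ y in roomsAndHalls, uu N y)| ^ s) :=
        mul_le_mul' h1 h2

end RH
namespace RH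

lemma exists_N (K : ℝ) (hK : 0 < K) :
    ∃ N : ℕ, 1 ≤ N ∧ K * 2^(3*N+6) ≤ (Nat.factorial (N+1) : ℝ) := by
  have ht := FloorSemiring.tendsto_pow_div_factorial_atTop (8:ℝ)
  have hev := ht.eventually (gt_mem_nhds (show (0:ℝ) < 1/(64*K) by positivity))
  obtain ⟨N, hN⟩ := (hev.and (Filter.eventually_ge_atTop 1)).exists
  refine ⟨N, hN.2, ?_⟩
  have hfac : (0:ℝ) < (Nat.factorial N : ℝ) := by exact_mod_cast Nat.factorial_pos N
  have h1 : (8:ℝ)^N / (Nat.factorial N : ℝ) < 1/(64*K) := hN.1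
  rw [div_lt_div_iff₀ hfac (by positivity)] at h1
  have h2 : K * 2^(3*N+6) ≤ (Nat.factorial N : ℝ) := by
    have e : (2:ℝ)^(3*N+6) = 64 * 8^N := by
      rw [pow_add, show (8:ℝ) = 2^3 by norm_num, ← pow_mul]
      norm_num
      ring
    rw [e]
    nlinarith [pow_pos (show (0:ℝ) < 8 by norm_num) N]
  calc K * 2^(3*N+6) ≤ (Nat.factorial N : ℝ) := h2
    _ ≤ (Nat.factorial (N+1) : ℝ) := by
        exact_mod_cast Nat.factorial_le (Nat.le_succ N)

lemma W_rpow (s : ℝ) (hs : 1 ≤ s) (N : ℕ) (hN : 1 ≤ N) :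
    (bb N / 2) * ((1/2^(N+2)) * (1/2)) ≤ ((bb N / 2)^s * (1/2^(N+2)) * (1/2))^(1/s) := by
  have hs0 : (0:ℝ) < s := by linarith
  set β := bb N / 2 with hβ
  have hβpos : 0 < β := by have := bb_pos N hN; simp only [hβ]; linarith
  set δ := (1/(2:ℝ)^(N+2)) * (1/2) with hδ
  have hδpos : 0 < δ := by positivity
  have hδ1 : δ ≤ 1 := by
    simp only [hδ]
    have : (1:ℝ) ≤ 2^(N+2) := one_le_pow₀ (by norm_num)
    rw [div_mul_div_comm]
    apply div_le_one_of_le₀ _ (by positivity)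
    nlinarith
  have he : β^s * (1/(2:ℝ)^(N+2)) * (1/2) = β^s * δ := by rw [hδ]; ring
  rw [he]
  rw [Real.mul_rpow (Real.rpow_nonneg hβpos.le s) hδpos.le]
  rw [← Real.rpow_mul hβpos.le, mul_one_div_cancel hs0.ne', Real.rpow_one]
  apply mul_le_mul_of_nonneg_left _ hβpos.le
  calc δ = δ^(1:ℝ) := (Real.rpow_one δ).symm
    _ ≤ δ^(1/s) := Real.rpow_le_rpow_of_exponent_ge hδpos hδ1 (by
        rw [div_le_one hs0]; exact hs)

end RH

/-- The rooms-and-halls domain is not `L^s`-averaging for any `1 ≤ s < ∞`. -/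
theorem roomsAndHalls_not_LsAveraging (s : ℝ) (hs : 1 ≤ s) :
    ¬ IsLsAveragingDomain s roomsAndHalls := by
  rintro ⟨C, hC, h⟩
  have hs0 : (0:ℝ) < s := by linarith
  have hinv : (0:ℝ) < 1/s := by positivity
  set K := C.toReal + 1 with hK
  have hKpos : 0 < K := by have := ENNReal.toReal_nonneg (a := C); linarith
  obtain ⟨N, hN1, hNfac⟩ := RH.exists_N K hKpos
  -- `bb N` is large
  have hbbK : K ≤ (RH.bb N / 2) * ((1/2^(N+2)) * (1/2)) := by
    have h1 : RH.aj N ≤ RH.bb N := RH.aj_le_bb N hN1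
    have h4 : (4:ℝ)^(N+1) > 0 := by positivity
    have e1 : (2:ℝ)^(3*N+6) = 2^(N+4) * 4^(N+1) := by
      rw [show (4:ℝ) = 2^2 by norm_num, ← pow_mul, ← pow_add]
      congr 1
      omega
    have e2 : (RH.bb N / 2) * ((1/(2:ℝ)^(N+2)) * (1/2)) = RH.bb N / 2^(N+4) := by
      have h3 : ((2:ℝ))^(N+4) = 2^(N+2) * 4 := by rw [pow_add, pow_add]; norm_num; ring
      rw [h3, div_mul_div_comm, div_mul_div_comm, one_mul]
      ring
    rw [e2]
    rw [le_div_iff₀ (by positivity)]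
    have haj : RH.aj N = (Nat.factorial (N+1) : ℝ) / 4^(N+1) := rfl
    have h5 : K * 2^(N+4) * 4^(N+1) ≤ (Nat.factorial (N+1) : ℝ) := by
      calc K * 2^(N+4) * 4^(N+1) = K * 2^(3*N+6) := by rw [e1]; ring
        _ ≤ _ := hNfac
    have h6 : K * 2^(N+4) ≤ RH.aj N := by
      rw [haj, le_div_iff₀ h4]
      exact h5
    exact le_trans h6 h1
  have hloc : MeasureTheory.LocallyIntegrableOn (RH.uu N) roomsAndHalls volume :=
    ((RH.uu_continuous N).locallyIntegrable).locallyIntegrableOn _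
  have hmain := h (RH.uu N) hloc
  -- the right-hand side is at most `C`
  have hsup : (⨆ (x : EuclideanSpace ℝ (Fin 2)) (ρ : ℝ) (_ : 0 < ρ ∧ ball x ρ ⊆ roomsAndHalls),
      (lsAvgE s (RH.uu N) (ball x ρ)) ^ (1/s)) ≤ 1 := by
    apply iSup_le; intro x
    apply iSup_le; intro ρ
    apply iSup_le; intro hp
    exact RH.ball_term_le s hs N hp.1 hp.2
  have hrhs : C * (⨆ (x : EuclideanSpace ℝ (Fin 2)) (ρ : ℝ) (_ : 0 < ρ ∧ ball x ρ ⊆ roomsAndHalls),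
      (lsAvgE s (RH.uu N) (ball x ρ)) ^ (1/s)) ≤ C := by
    calc _ ≤ C * 1 := mul_le_mul_right hsup C
      _ = C := mul_one C
  -- the left-hand side is at least `ofReal K`
  have hWnonneg : (0:ℝ) ≤ (RH.bb N / 2)^s * (1/2^(N+2)) * (1/2) := by
    have := RH.bb_pos N hN1
    have : (0:ℝ) ≤ (RH.bb N / 2)^s := Real.rpow_nonneg (by linarith) s
    positivity
  have hlhs : ENNReal.ofReal K ≤ (lsAvgE s (RH.uu N) roomsAndHalls) ^ (1/s) := by
    calc ENNReal.ofReal K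
        ≤ ENNReal.ofReal (((RH.bb N / 2)^s * (1/2^(N+2)) * (1/2))^(1/s)) :=
          ENNReal.ofReal_le_ofReal (le_trans hbbK (RH.W_rpow s hs N hN1))
      _ = ENNReal.ofReal ((RH.bb N / 2)^s * (1/2^(N+2)) * (1/2)) ^ (1/s) :=
          (ENNReal.ofReal_rpow_of_nonneg hWnonneg hinv.le).symm
      _ ≤ (lsAvgE s (RH.uu N) roomsAndHalls) ^ (1/s) :=
          ENNReal.rpow_le_rpow (RH.lsAvg_lower s hs N hN1) hinv.le
  have hfinal : ENNReal.ofReal K ≤ C := le_trans hlhs (le_trans hmain hrhs)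
  have hCK : C < ENNReal.ofReal K := by
    conv_lhs => rw [← ENNReal.ofReal_toReal hC]
    rw [ENNReal.ofReal_lt_ofReal_iff hKpos]
    rw [hK]
    linarith
  exact absurd hfinal (not_le.2 hCK)
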